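/- arXiv:2001.11748 — 4 statements merged into one kernel-verified Lean document; each statement's English description precedes it below -/
import Mathlib

section
/- Let ρ_AB be a two-qubit quantum state on C^2⊗C^2 and let μ ∈ (0, 1/√3]. If H(ρ_AB) > 1/μ, then ρ_AB is steerable from Bob to Alice and also steerable from Alice to Bob. -/
open Matrix BigOperators
open scoped Kronecker ComplexOrder

noncomputable section

/-- A quantum state (density matrix): positive semidefinite with trace one. -/
def IsState {ι : Type*} [Fintype ι] [DecidableEq ι] (ρ : Matrix ι ι ℂ) : Prop :=
  ρ.PosSemidef ∧ ρ.trace = 1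

/-- A POVM: a finite family of positive semidefinite matrices summing to the identity. -/
def IsPOVM {ι : Type*} [Fintype ι] [DecidableEq ι] {m : ℕ}
    (E : Fin m → Matrix ι ι ℂ) : Prop :=
  (∀ j, (E j).PosSemidef) ∧ (∑ j, E j = 1)

/-- Partial trace over the second tensor factor. -/
def ptraceB {dA dB : ℕ} (ρ : Matrix (Fin dA × Fin dB) (Fin dA × Fin dB) ℂ) :
    Matrix (Fin dA) (Fin dA) ℂ :=
  Matrix.of fun i j => ∑ k : Fin dB, ρ (i, k) (j, k)

/-- Partial trace over the first tensor factor. -/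
def ptraceA {dA dB : ℕ} (ρ : Matrix (Fin dA × Fin dB) (Fin dA × Fin dB) ℂ) :
    Matrix (Fin dB) (Fin dB) ℂ :=
  Matrix.of fun i j => ∑ k : Fin dA, ρ (k, i) (k, j)

/-- Local-hidden-state model for steering from Bob (second factor) to Alice (first factor). -/
def UnsteerableBtoA {dA dB : ℕ} (ρ : Matrix (Fin dA × Fin dB) (Fin dA × Fin dB) ℂ) : Prop :=
  ∃ (L : ℕ) (p : Fin L → ℝ) (σ : Fin L → Matrix (Fin dA) (Fin dA) ℂ),
    (∀ l, 0 ≤ p l) ∧ (∑ l, p l = 1) ∧ (∀ l, IsState (σ l)) ∧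
    ∀ (m : ℕ) (E : Fin m → Matrix (Fin dB) (Fin dB) ℂ), IsPOVM E →
      ∃ q : Fin m → Fin L → ℝ,
        (∀ j l, 0 ≤ q j l) ∧ (∀ l, ∑ j, q j l = 1) ∧
        ∀ j, ptraceB ((1 ⊗ₖ E j) * ρ) = ∑ l, ((p l * q j l : ℝ) : ℂ) • σ l

/-- Local-hidden-state model for steering from Alice (first factor) to Bob (second factor). -/
def UnsteerableAtoB {dA dB : ℕ} (ρ : Matrix (Fin dA × Fin dB) (Fin dA × Fin dB) ℂ) : Prop :=
  ∃ (L : ℕ) (p : Fin L → ℝ) (σ : Fin L → Matrix (Fin dB) (Fin dB) ℂ),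
    (∀ l, 0 ≤ p l) ∧ (∑ l, p l = 1) ∧ (∀ l, IsState (σ l)) ∧
    ∀ (m : ℕ) (E : Fin m → Matrix (Fin dA) (Fin dA) ℂ), IsPOVM E →
      ∃ q : Fin m → Fin L → ℝ,
        (∀ j l, 0 ≤ q j l) ∧ (∀ l, ∑ j, q j l = 1) ∧
        ∀ j, ptraceA ((E j ⊗ₖ 1) * ρ) = ∑ l, ((p l * q j l : ℝ) : ℂ) • σ l

/-- Separable bipartite state: a finite convex combination of product density matrices. -/
def SeparableState {dA dB : ℕ} (τ : Matrix (Fin dA × Fin dB) (Fin dA × Fin dB) ℂ) : Prop :=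
  ∃ (m : ℕ) (q : Fin m → ℝ) (α : Fin m → Matrix (Fin dA) (Fin dA) ℂ)
      (β : Fin m → Matrix (Fin dB) (Fin dB) ℂ),
    (∀ k, 0 ≤ q k) ∧ (∑ k, q k = 1) ∧ (∀ k, IsState (α k)) ∧ (∀ k, IsState (β k)) ∧
    τ = ∑ k, ((q k : ℝ) : ℂ) • (α k ⊗ₖ β k)

/-- A complete set of `d+1` mutually unbiased measurements on ℂ^d with efficiency
parameter `κ` (`1/d < κ ≤ 1`): every pair of the `d+1` POVMs is mutually unbiased. -/
def IsCompleteMUM (d : ℕ) (κ : ℝ) (P : Fin (d+1) → Fin d → Matrix (Fin d) (Fin d) ℂ) : Prop :=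
  ((d : ℝ)⁻¹ < κ ∧ κ ≤ 1) ∧
  (∀ b, IsPOVM (P b)) ∧
  (∀ b n, (P b n).trace = 1) ∧
  (∀ b b' n n', b ≠ b' → (P b n * P b' n').trace = ((d : ℂ))⁻¹) ∧
  (∀ b n n', (P b n * P b n').trace =
    if n = n' then ((κ : ℝ) : ℂ) else (((1 - κ) / ((d : ℝ) - 1) : ℝ) : ℂ))

/-- A general symmetric informationally complete POVM on ℂ^d with efficiency parameter `a`. -/
def IsGSIC (d : ℕ) (a : ℝ) (P : Fin (d^2) → Matrix (Fin d) (Fin d) ℂ) : Prop :=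
  (((d : ℝ)^3)⁻¹ < a ∧ a ≤ ((d : ℝ)^2)⁻¹) ∧
  (∀ j, (P j).PosSemidef) ∧ (∑ j, P j = 1) ∧
  (∀ j, (P j * P j).trace = ((a : ℝ) : ℂ)) ∧
  (∀ j k, j ≠ k → (P j * P k).trace =
    (((1 - (d : ℝ) * a) / ((d : ℝ) * ((d : ℝ)^2 - 1)) : ℝ) : ℂ))

/-- The operators `R_n^(b)` built from a complete set of qubit MUMs: `R_n^(b) = Q_n^(b)`
for `b ≤ 3`, `n ≤ 2`, and `R_n^(b) = I/2` otherwise. -/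
def Rmum (d : ℕ) (Q : Fin 3 → Fin 2 → Matrix (Fin 2) (Fin 2) ℂ)
    (b : Fin (d+1)) (n : Fin d) : Matrix (Fin 2) (Fin 2) ℂ :=
  if hb : (b : ℕ) < 3 then
    if hn : (n : ℕ) < 2 then Q ⟨(b : ℕ), hb⟩ ⟨(n : ℕ), hn⟩ else (2 : ℂ)⁻¹ • 1
  else (2 : ℂ)⁻¹ • 1

/-- The operators `R_j` built from a qubit general SIC-POVM: `R_j = Q_j` for `j ≤ 4`
and `R_j = I/4` otherwise. -/
def Rgsic (d : ℕ) (Q : Fin (2^2) → Matrix (Fin 2) (Fin 2) ℂ)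
    (j : Fin (d^2)) : Matrix (Fin 2) (Fin 2) ℂ :=
  if hj : (j : ℕ) < 4 then Q ⟨(j : ℕ), lt_of_lt_of_eq hj (by norm_num)⟩
  else (4 : ℂ)⁻¹ • 1

/-- The Pauli matrices σ₁, σ₂, σ₃. -/
def pauli : Fin 3 → Matrix (Fin 2) (Fin 2) ℂ
  | 0 => !![0, 1; 1, 0]
  | 1 => !![0, -Complex.I; Complex.I, 0]
  | 2 => !![1, 0; 0, -1]

/-- `H(ρ) = Tr[(σ₁⊗σ₁ − σ₂⊗σ₂ + σ₃⊗σ₃)ρ]` for a two-qubit state. -/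
def Hcorr (ρ : Matrix (Fin 2 × Fin 2) (Fin 2 × Fin 2) ℂ) : ℝ :=
  (((pauli 0 ⊗ₖ pauli 0 - pauli 1 ⊗ₖ pauli 1 + pauli 2 ⊗ₖ pauli 2) * ρ).trace).re

section AuxSteering

-- POVM from a Pauli observable
def pauliPOVM (k : Fin 3) : Fin 2 → Matrix (Fin 2) (Fin 2) ℂ :=
  ![(2:ℂ)⁻¹ • (1 + pauli k), (2:ℂ)⁻¹ • (1 - pauli k)]

lemma pauliPOVM_isPOVM (k : Fin 3) : IsPOVM (pauliPOVM k) := by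
  constructor
  · intro j
    have hproj : ∀ M : Matrix (Fin 2) (Fin 2) ℂ, Mᴴ * M = M → M.PosSemidef := by
      intro M hM; simpa [hM] using Matrix.posSemidef_conjTranspose_mul_self M
    apply hproj
    fin_cases k <;> fin_cases j <;>
      ext i j' <;> fin_cases i <;> fin_cases j' <;>
      simp [pauliPOVM, pauli, mul_apply, Fin.sum_univ_two, Matrix.one_apply,
        Matrix.conjTranspose_apply, Complex.ext_iff] <;> norm_num
  · ext i j
    fin_cases k <;> fin_cases i <;> fin_cases j <;>
      simp [pauliPOVM, pauli, Fin.sum_univ_two, Matrix.one_apply, Complex.ext_iff] <;> norm_num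

lemma pauli_eq_diff (k : Fin 3) : pauli k = pauliPOVM k 0 - pauliPOVM k 1 := by
  ext i j
  simp [pauliPOVM, Matrix.sub_apply, Matrix.smul_apply, Matrix.add_apply, Matrix.one_apply]
  split_ifs <;> ring

lemma kron_sub_one (X Y : Matrix (Fin 2) (Fin 2) ℂ) :
    (1 : Matrix (Fin 2) (Fin 2) ℂ) ⊗ₖ (X - Y) = 1 ⊗ₖ X - 1 ⊗ₖ Y := by
  ext ⟨i,k⟩ ⟨j,l⟩
  simp [Matrix.kroneckerMap_apply, Matrix.sub_apply, mul_sub]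

lemma sub_kron_one (X Y : Matrix (Fin 2) (Fin 2) ℂ) :
    (X - Y) ⊗ₖ (1 : Matrix (Fin 2) (Fin 2) ℂ) = X ⊗ₖ 1 - Y ⊗ₖ 1 := by
  ext ⟨i,k⟩ ⟨j,l⟩
  simp [Matrix.kroneckerMap_apply, Matrix.sub_apply, sub_mul]

lemma ptraceB_sub {dA dB : ℕ} (X Y : Matrix (Fin dA × Fin dB) (Fin dA × Fin dB) ℂ) :
    ptraceB (X - Y) = ptraceB X - ptraceB Y := by
  ext i j
  simp [ptraceB, Finset.sum_sub_distrib]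

lemma ptraceA_sub {dA dB : ℕ} (X Y : Matrix (Fin dA × Fin dB) (Fin dA × Fin dB) ℂ) :
    ptraceA (X - Y) = ptraceA X - ptraceA Y := by
  ext i j
  simp [ptraceA, Finset.sum_sub_distrib]

lemma trace_kron_ptraceB (A B : Matrix (Fin 2) (Fin 2) ℂ)
    (ρ : Matrix (Fin 2 × Fin 2) (Fin 2 × Fin 2) ℂ) :
    ((A ⊗ₖ B) * ρ).trace = (A * ptraceB ((1 ⊗ₖ B) * ρ)).trace := by
  simp [Matrix.trace, mul_apply, ptraceB, Fintype.sum_prod_type, Matrix.one_apply,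
    Finset.mul_sum, Fin.sum_univ_two, Matrix.diag]
  ring

lemma trace_kron_ptraceA (A B : Matrix (Fin 2) (Fin 2) ℂ)
    (ρ : Matrix (Fin 2 × Fin 2) (Fin 2 × Fin 2) ℂ) :
    ((A ⊗ₖ B) * ρ).trace = (B * ptraceA ((A ⊗ₖ 1) * ρ)).trace := by
  simp [Matrix.trace, mul_apply, ptraceA, Fintype.sum_prod_type, Matrix.one_apply,
    Finset.mul_sum, Fin.sum_univ_two, Matrix.diag]
  ring


set_option maxHeartbeats 1000000 in
lemma bloch (σ : Matrix (Fin 2) (Fin 2) ℂ) (h : IsState σ) :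
    ((pauli 0 * σ).trace.re)^2 + ((pauli 1 * σ).trace.re)^2 + ((pauli 2 * σ).trace.re)^2 ≤ 1 := by
  obtain ⟨hpsd, htr⟩ := h
  obtain ⟨hherm, hquad⟩ := Matrix.posSemidef_iff_dotProduct_mulVec.mp hpsd
  have h10 : σ 1 0 = star (σ 0 1) := (hherm.apply 1 0).symm
  have ha := hquad ![1,0]
  have hd := hquad ![0,1]
  have hx := hquad ![σ 0 1, -(σ 0 0)]
  have hy := hquad ![-(σ 1 1), σ 1 0]
  rw [Complex.nonneg_iff] at ha hd hx hy
  obtain ⟨ha1, ha2⟩ := ha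
  obtain ⟨hd1, hd2⟩ := hd
  obtain ⟨hx1, -⟩ := hx
  obtain ⟨hy1, -⟩ := hy
  have htr' := congrArg Complex.re htr
  simp only [Matrix.trace, Fin.sum_univ_two, Matrix.diag, Complex.add_re, Complex.one_re] at htr'
  simp only [dotProduct, mulVec, Fin.sum_univ_two, h10, Matrix.cons_val_zero,
    Matrix.cons_val_one, Matrix.head_cons, Complex.add_re, Complex.mul_re, Complex.mul_im,
    Complex.add_im, Complex.neg_re, Complex.neg_im, Complex.one_re, Complex.one_im,
    Complex.zero_re, Complex.zero_im, Pi.star_apply, RCLike.star_def, Complex.conj_re,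
    Complex.conj_im, mul_zero, zero_mul, mul_one, one_mul, add_zero, zero_add, neg_zero,
    neg_neg, mul_neg, neg_mul] at ha1 ha2 hd1 hd2 hx1 hy1
  rw [← ha2, ← hd2] at hx1 hy1
  ring_nf at hx1 hy1
  have e0 : ((pauli 0 * σ).trace).re = 2*(σ 0 1).re := by
    simp [pauli, Matrix.trace, Matrix.diag, mul_apply, Fin.sum_univ_two, h10]; ring
  have e1 : ((pauli 1 * σ).trace).re = -(2*(σ 0 1).im) := by
    simp [pauli, Matrix.trace, Matrix.diag, mul_apply, Fin.sum_univ_two, h10]; ring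
  have e2 : ((pauli 2 * σ).trace).re = (σ 0 0).re - (σ 1 1).re := by
    simp [pauli, Matrix.trace, Matrix.diag, mul_apply, Fin.sum_univ_two, h10]; ring
  rw [e0, e1, e2]
  have hs : (σ 0 1).re^2 + (σ 0 1).im^2 ≤ (σ 0 0).re * (σ 1 1).re := by
    nlinarith [hx1, hy1, htr']
  nlinarith [hs, htr', ha1, hd1, sq_nonneg ((σ 0 0).re - (σ 1 1).re)]


set_option maxHeartbeats 1000000 in
lemma cs_bound (b0 b1 b2 t0 t1 t2 : ℝ) (h0 : |b0| ≤ 1) (h1 : |b1| ≤ 1) (h2 : |b2| ≤ 1)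
    (hT0 : 0 ≤ t0^2 + t1^2 + t2^2) (hT : t0^2 + t1^2 + t2^2 ≤ 1) :
    b0*t0 - b1*t1 + b2*t2 ≤ Real.sqrt 3 := by
  have hB : b0^2 + b1^2 + b2^2 ≤ 3 := by
    have := abs_le.mp h0; have := abs_le.mp h1; have := abs_le.mp h2
    nlinarith [this.1, this.2]
  have hCS : (b0*t0 - b1*t1 + b2*t2)^2 ≤ (b0^2+b1^2+b2^2)*(t0^2+t1^2+t2^2) := by
    nlinarith [sq_nonneg (b0*t1 + b1*t0), sq_nonneg (b0*t2 - b2*t0), sq_nonneg (b1*t2 + b2*t1)]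
  have hB0 : 0 ≤ b0^2 + b1^2 + b2^2 := by positivity
  have h3 : (b0*t0 - b1*t1 + b2*t2)^2 ≤ 3 := by nlinarith
  calc b0*t0 - b1*t1 + b2*t2 ≤ |b0*t0 - b1*t1 + b2*t2| := le_abs_self _
    _ = Real.sqrt ((b0*t0 - b1*t1 + b2*t2)^2) := (Real.sqrt_sq_eq_abs _).symm
    _ ≤ Real.sqrt 3 := Real.sqrt_le_sqrt h3

set_option maxHeartbeats 2000000 in
lemma boundBtoA (ρAB : Matrix (Fin 2 × Fin 2) (Fin 2 × Fin 2) ℂ)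
    (h : UnsteerableBtoA ρAB) : Hcorr ρAB ≤ Real.sqrt 3 := by
  obtain ⟨L, p, σs, hp0, hp1, hσ, hmod⟩ := h
  choose q hq0 hq1 heq using fun k => hmod 2 (pauliPOVM k) (pauliPOVM_isPOVM k)
  set b : Fin 3 → Fin L → ℝ := fun k l => q k 0 l - q k 1 l with hbdef
  have key : ∀ k, ptraceB ((1 ⊗ₖ pauli k) * ρAB)
      = ∑ l, ((p l * b k l : ℝ) : ℂ) • σs l := by
    intro k
    rw [pauli_eq_diff k, kron_sub_one, sub_mul, ptraceB_sub, heq k 0, heq k 1,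
      ← Finset.sum_sub_distrib]
    refine Finset.sum_congr rfl fun l _ => ?_
    rw [← sub_smul]
    congr 1
    rw [hbdef]
    push_cast
    ring
  have tr_eq : ∀ k, ((pauli k ⊗ₖ pauli k) * ρAB).trace
      = ∑ l, ((p l * b k l : ℝ) : ℂ) * (pauli k * σs l).trace := by
    intro k
    rw [trace_kron_ptraceB, key k, Finset.mul_sum]
    simp [Matrix.mul_smul, Matrix.trace_smul, Matrix.trace_sum, smul_eq_mul]
  have hH : Hcorr ρAB = ∑ l, p l * (b 0 l * ((pauli 0 * σs l).trace).re
      - b 1 l * ((pauli 1 * σs l).trace).re + b 2 l * ((pauli 2 * σs l).trace).re) := by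
    unfold Hcorr
    rw [add_mul, sub_mul, Matrix.trace_add, Matrix.trace_sub, tr_eq 0, tr_eq 1, tr_eq 2]
    rw [← Finset.sum_sub_distrib, ← Finset.sum_add_distrib]
    rw [Complex.re_sum]
    refine Finset.sum_congr rfl fun l _ => ?_
    simp [Complex.sub_re, Complex.add_re, Complex.re_ofReal_mul]
    ring
  rw [hH]
  calc ∑ l, p l * (b 0 l * ((pauli 0 * σs l).trace).re
      - b 1 l * ((pauli 1 * σs l).trace).re + b 2 l * ((pauli 2 * σs l).trace).re)
      ≤ ∑ l, p l * Real.sqrt 3 := by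
        refine Finset.sum_le_sum fun l _ => ?_
        refine mul_le_mul_of_nonneg_left ?_ (hp0 l)
        have hb : ∀ k, |b k l| ≤ 1 := by
          intro k
          have hsum := hq1 k l
          rw [Fin.sum_univ_two] at hsum
          have := hq0 k 0 l; have := hq0 k 1 l
          rw [abs_le]
          constructor <;> simp [hbdef] <;> linarith [hq0 k 0 l, hq0 k 1 l]
        have hT := bloch (σs l) (hσ l)
        exact cs_bound _ _ _ _ _ _ (hb 0) (hb 1) (hb 2) (by positivity) hT
    _ = Real.sqrt 3 := by rw [← Finset.sum_mul, hp1, one_mul]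

lemma boundAtoB (ρAB : Matrix (Fin 2 × Fin 2) (Fin 2 × Fin 2) ℂ)
    (h : UnsteerableAtoB ρAB) : Hcorr ρAB ≤ Real.sqrt 3 := by
  obtain ⟨L, p, σs, hp0, hp1, hσ, hmod⟩ := h
  choose q hq0 hq1 heq using fun k => hmod 2 (pauliPOVM k) (pauliPOVM_isPOVM k)
  set b : Fin 3 → Fin L → ℝ := fun k l => q k 0 l - q k 1 l with hbdef
  have key : ∀ k, ptraceA ((pauli k ⊗ₖ 1) * ρAB)
      = ∑ l, ((p l * b k l : ℝ) : ℂ) • σs l := by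
    intro k
    rw [pauli_eq_diff k, sub_kron_one, sub_mul, ptraceA_sub, heq k 0, heq k 1,
      ← Finset.sum_sub_distrib]
    refine Finset.sum_congr rfl fun l _ => ?_
    rw [← sub_smul]
    congr 1
    rw [hbdef]
    push_cast
    ring
  have tr_eq : ∀ k, ((pauli k ⊗ₖ pauli k) * ρAB).trace
      = ∑ l, ((p l * b k l : ℝ) : ℂ) * (pauli k * σs l).trace := by
    intro k
    rw [trace_kron_ptraceA, key k, Finset.mul_sum]
    simp [Matrix.mul_smul, Matrix.trace_smul, Matrix.trace_sum, smul_eq_mul]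
  have hH : Hcorr ρAB = ∑ l, p l * (b 0 l * ((pauli 0 * σs l).trace).re
      - b 1 l * ((pauli 1 * σs l).trace).re + b 2 l * ((pauli 2 * σs l).trace).re) := by
    unfold Hcorr
    rw [add_mul, sub_mul, Matrix.trace_add, Matrix.trace_sub, tr_eq 0, tr_eq 1, tr_eq 2]
    rw [← Finset.sum_sub_distrib, ← Finset.sum_add_distrib]
    rw [Complex.re_sum]
    refine Finset.sum_congr rfl fun l _ => ?_
    simp [Complex.sub_re, Complex.add_re, Complex.re_ofReal_mul]
    ring
  rw [hH]
  calc ∑ l, p l * (b 0 l * ((pauli 0 * σs l).trace).re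
      - b 1 l * ((pauli 1 * σs l).trace).re + b 2 l * ((pauli 2 * σs l).trace).re)
      ≤ ∑ l, p l * Real.sqrt 3 := by
        refine Finset.sum_le_sum fun l _ => ?_
        refine mul_le_mul_of_nonneg_left ?_ (hp0 l)
        have hb : ∀ k, |b k l| ≤ 1 := by
          intro k
          have hsum := hq1 k l
          rw [Fin.sum_univ_two] at hsum
          rw [abs_le]
          constructor <;> simp [hbdef] <;> linarith [hq0 k 0 l, hq0 k 1 l]
        have hT := bloch (σs l) (hσ l)
        exact cs_bound _ _ _ _ _ _ (hb 0) (hb 1) (hb 2) (by positivity) hT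
    _ = Real.sqrt 3 := by rw [← Finset.sum_mul, hp1, one_mul]

end AuxSteering

/-- Corollary 1: for a two-qubit state, `H(ρ) > 1/μ` implies both-way steerability. -/
theorem steering_two_qubit_Hcorr (μ : ℝ) (hμ : μ ∈ Set.Ioc (0 : ℝ) (1 / Real.sqrt 3))
    (ρAB : Matrix (Fin 2 × Fin 2) (Fin 2 × Fin 2) ℂ) (hρ : IsState ρAB)
    (hH : Hcorr ρAB > 1 / μ) :
    ¬ UnsteerableBtoA ρAB ∧ ¬ UnsteerableAtoB ρAB := by
  obtain ⟨hμ0, hμ1⟩ := hμ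
  have hs3 : (0:ℝ) < Real.sqrt 3 := Real.sqrt_pos.mpr (by norm_num)
  have hle : Real.sqrt 3 ≤ 1 / μ := by
    rw [le_div_iff₀ hμ0]
    calc Real.sqrt 3 * μ ≤ Real.sqrt 3 * (1 / Real.sqrt 3) :=
          mul_le_mul_of_nonneg_left hμ1 hs3.le
      _ = 1 := by field_simp
  constructor
  · intro h
    have := boundBtoA ρAB h
    linarith
  · intro h
    have := boundAtoB ρAB h
    linarith
end
end

section
/- Let d ≥ 2, let ρ_AB be a bipartite quantum state on C^d⊗C^2 with reduced state ρ_A = Tr_B[ρ_AB], let {P^(b)}_{b=1}^{d+1} be a complete set of MUMs on C^d with efficiency parameter κ1, let {Q^(b)}_{b=1}^{3} be a complete set of MUMs on C^2 with efficiency parameter κ2, and let μ ∈ (0, 1/√3]. Assume that every separable state σ on C^d⊗C^2 satisfies J(σ) ≤ √(κ1+1)·√(κ2+1+(d+3)(d−2)/4). If J(ρ_AB) > √(κ1+1)·√(4κ2+4+(d+3)(d−2))/(2μ) − (d+1)(1−μ)/(2μ), then the state τ_AB = μ ρ_AB + (1−μ) ρ_A ⊗ (I_2/2) is entangled (not separable).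 -/
open Matrix BigOperators
open scoped Kronecker ComplexOrder

noncomputable section

/-- If the MUM separability bound holds and `J(ρ)` exceeds the steering threshold, then
`τ = μ ρ + (1−μ) ρ_A ⊗ I/2` is entangled (qudit-qubit case). -/
theorem entangled_mixture_MUM_qudit_qubit (d : ℕ) (hd : 2 ≤ d) (κ1 κ2 μ : ℝ)
    (hμ : μ ∈ Set.Ioc (0 : ℝ) (1 / Real.sqrt 3))
    (ρAB : Matrix (Fin d × Fin 2) (Fin d × Fin 2) ℂ) (hρ : IsState ρAB)
    (P : Fin (d+1) → Fin d → Matrix (Fin d) (Fin d) ℂ)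
    (Q : Fin 3 → Fin 2 → Matrix (Fin 2) (Fin 2) ℂ)
    (hP : IsCompleteMUM d κ1 P) (hQ : IsCompleteMUM 2 κ2 Q)
    (hsep : ∀ σ : Matrix (Fin d × Fin 2) (Fin d × Fin 2) ℂ, SeparableState σ →
      ∑ b, ∑ n, (((P b n ⊗ₖ Rmum d Q b n) * σ).trace).re ≤
        Real.sqrt (κ1 + 1) * Real.sqrt (κ2 + 1 + ((d : ℝ) + 3) * ((d : ℝ) - 2) / 4))
    (hJ : ∑ b, ∑ n, (((P b n ⊗ₖ Rmum d Q b n) * ρAB).trace).re >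
      Real.sqrt (κ1 + 1) * Real.sqrt (4 * κ2 + 4 + ((d : ℝ) + 3) * ((d : ℝ) - 2)) / (2 * μ)
        - ((d : ℝ) + 1) * (1 - μ) / (2 * μ)) :
    ¬ SeparableState ((μ : ℂ) • ρAB + ((1 - μ : ℝ) : ℂ) • (ptraceB ρAB ⊗ₖ ((2 : ℂ)⁻¹ • 1))) := by
  obtain ⟨hμ0, hμ1⟩ := hμ
  have hμne : μ ≠ 0 := ne_of_gt hμ0
  intro hTau
  have key := hsep _ hTau
  obtain ⟨hκQ, hQpovm, hQtr, -, -⟩ := hQ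
  obtain ⟨hκP, hPpovm, hPtr, -, -⟩ := hP
  -- trace of each Rmum is 1
  have hTrR : ∀ (b : Fin (d+1)) (n : Fin d), (Rmum d Q b n).trace = 1 := by
    intro b n
    unfold Rmum
    split_ifs with hb hn
    · exact hQtr _ _
    · simp [Matrix.trace_smul, Matrix.trace_one]
    · simp [Matrix.trace_smul, Matrix.trace_one]
  -- trace of the reduced state is 1
  have hρA : (ptraceB ρAB).trace = 1 := by
    have h1 := hρ.2
    rw [Matrix.trace] at h1 ⊢
    simpa [ptraceB, Matrix.diag, Fintype.sum_prod_type] using h1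
  -- inner sum for the product part
  have hterm : ∀ b : Fin (d+1),
      ∑ n, ((P b n ⊗ₖ Rmum d Q b n) * (ptraceB ρAB ⊗ₖ ((2:ℂ)⁻¹ • 1))).trace = 2⁻¹ := by
    intro b
    have h2 : ∀ n : Fin d, ((P b n ⊗ₖ Rmum d Q b n) * (ptraceB ρAB ⊗ₖ ((2:ℂ)⁻¹ • 1))).trace
        = 2⁻¹ * (P b n * ptraceB ρAB).trace := by
      intro n
      rw [← Matrix.mul_kronecker_mul, Matrix.trace_kronecker, Matrix.mul_smul, Matrix.mul_one,
        Matrix.trace_smul, hTrR, smul_eq_mul, mul_one]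
      ring
    rw [Finset.sum_congr rfl (fun n _ => h2 n), ← Finset.mul_sum, ← Matrix.trace_sum,
      ← Finset.sum_mul, (hPpovm b).2, one_mul, hρA, mul_one]
  -- the value of J on τ (as a complex number)
  have hsumC : ∑ b, ∑ n, (((P b n ⊗ₖ Rmum d Q b n) *
        ((μ : ℂ) • ρAB + ((1 - μ : ℝ) : ℂ) • (ptraceB ρAB ⊗ₖ ((2 : ℂ)⁻¹ • 1)))).trace)
      = (μ : ℂ) * (∑ b, ∑ n, ((P b n ⊗ₖ Rmum d Q b n) * ρAB).trace)
        + ((1 - μ : ℝ) : ℂ) * (((d : ℂ) + 1) * 2⁻¹) := by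
    have h3 : ∀ (b : Fin (d+1)) (n : Fin d),
        ((P b n ⊗ₖ Rmum d Q b n) *
          ((μ : ℂ) • ρAB + ((1 - μ : ℝ) : ℂ) • (ptraceB ρAB ⊗ₖ ((2 : ℂ)⁻¹ • 1)))).trace
        = (μ : ℂ) * ((P b n ⊗ₖ Rmum d Q b n) * ρAB).trace
          + ((1 - μ : ℝ) : ℂ) * ((P b n ⊗ₖ Rmum d Q b n) * (ptraceB ρAB ⊗ₖ ((2:ℂ)⁻¹ • 1))).trace := by
      intro b n
      rw [mul_add, Matrix.mul_smul, Matrix.mul_smul, Matrix.trace_add, Matrix.trace_smul,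
        Matrix.trace_smul, smul_eq_mul, smul_eq_mul]
    calc ∑ b, ∑ n, (((P b n ⊗ₖ Rmum d Q b n) *
            ((μ : ℂ) • ρAB + ((1 - μ : ℝ) : ℂ) • (ptraceB ρAB ⊗ₖ ((2 : ℂ)⁻¹ • 1)))).trace)
        = ∑ b, ((μ : ℂ) * (∑ n, ((P b n ⊗ₖ Rmum d Q b n) * ρAB).trace)
            + ((1 - μ : ℝ) : ℂ) * (∑ n, ((P b n ⊗ₖ Rmum d Q b n) *
              (ptraceB ρAB ⊗ₖ ((2:ℂ)⁻¹ • 1))).trace)) := by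
          refine Finset.sum_congr rfl fun b _ => ?_
          rw [Finset.sum_congr rfl (fun n _ => h3 b n), Finset.sum_add_distrib,
            ← Finset.mul_sum, ← Finset.mul_sum]
      _ = ∑ b : Fin (d+1), ((μ : ℂ) * (∑ n, ((P b n ⊗ₖ Rmum d Q b n) * ρAB).trace)
            + ((1 - μ : ℝ) : ℂ) * 2⁻¹) := by
          refine Finset.sum_congr rfl fun b _ => ?_
          rw [hterm b]
      _ = (μ : ℂ) * (∑ b, ∑ n, ((P b n ⊗ₖ Rmum d Q b n) * ρAB).trace)
            + ((1 - μ : ℝ) : ℂ) * (((d : ℂ) + 1) * 2⁻¹) := by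
          rw [Finset.sum_add_distrib, ← Finset.mul_sum, Finset.sum_const, Finset.card_univ,
            Fintype.card_fin]
          push_cast
          ring
  -- take real parts
  have hsumR : ∑ b, ∑ n, (((P b n ⊗ₖ Rmum d Q b n) *
        ((μ : ℂ) • ρAB + ((1 - μ : ℝ) : ℂ) • (ptraceB ρAB ⊗ₖ ((2 : ℂ)⁻¹ • 1)))).trace).re
      = μ * (∑ b, ∑ n, (((P b n ⊗ₖ Rmum d Q b n) * ρAB).trace).re)
        + (1 - μ) * (((d : ℝ) + 1) / 2) := by
    have h4 : ∑ b, ∑ n, (((P b n ⊗ₖ Rmum d Q b n) *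
          ((μ : ℂ) • ρAB + ((1 - μ : ℝ) : ℂ) • (ptraceB ρAB ⊗ₖ ((2 : ℂ)⁻¹ • 1)))).trace).re
        = ((μ : ℂ) * (∑ b, ∑ n, ((P b n ⊗ₖ Rmum d Q b n) * ρAB).trace)
          + ((1 - μ : ℝ) : ℂ) * (((d : ℂ) + 1) * 2⁻¹)).re := by
      rw [← hsumC]
      simp [Complex.re_sum]
    rw [h4, Complex.add_re, Complex.re_ofReal_mul, Complex.re_ofReal_mul, Complex.re_sum]
    congr 1
    · congr 1
      exact Finset.sum_congr rfl fun b _ => Complex.re_sum _ _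
    · congr 1
      simp
      ring
  rw [hsumR] at key
  -- rewrite the sqrt in hJ
  set s := Real.sqrt (κ2 + 1 + ((d : ℝ) + 3) * ((d : ℝ) - 2) / 4) with hs
  have hsq : Real.sqrt (4 * κ2 + 4 + ((d : ℝ) + 3) * ((d : ℝ) - 2)) = 2 * s := by
    rw [show 4 * κ2 + 4 + ((d : ℝ) + 3) * ((d : ℝ) - 2)
        = 4 * (κ2 + 1 + ((d : ℝ) + 3) * ((d : ℝ) - 2) / 4) by ring,
      Real.sqrt_mul (by norm_num : (0:ℝ) ≤ 4), hs,
      show (4:ℝ) = 2 ^ 2 by norm_num, Real.sqrt_sq (by norm_num : (0:ℝ) ≤ 2)]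
  rw [hsq] at hJ
  set J := ∑ b, ∑ n, (((P b n ⊗ₖ Rmum d Q b n) * ρAB).trace).re
  have hmul : μ * (Real.sqrt (κ1 + 1) * (2 * s) / (2 * μ) - ((d : ℝ) + 1) * (1 - μ) / (2 * μ))
      = Real.sqrt (κ1 + 1) * s - ((d : ℝ) + 1) * (1 - μ) / 2 := by
    field_simp
  have hμJ : μ * J > Real.sqrt (κ1 + 1) * s - ((d : ℝ) + 1) * (1 - μ) / 2 := by
    rw [← hmul]
    exact (mul_lt_mul_iff_right₀ hμ0).mpr hJ
  linarith [key, hμJ]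
end
end

section
/- Let d ≥ 2, let ρ_AB be a bipartite quantum state on C^d⊗C^2 with reduced state ρ_A = Tr_B[ρ_AB], let {P_j}_{j=1}^{d²} be a general SIC-POVM on C^d with efficiency parameter a1, let {Q_j}_{j=1}^{4} be a general SIC-POVM on C^2 with efficiency parameter a2, and let μ ∈ (0, 1/√3]. Assume that every separable state σ on C^d⊗C^2 satisfies J(σ) ≤ √((a1 d²+1)/(d(d+1)))·√((4a2+1)/6 + (d²−4)/16). If J(ρ_AB) > √((a1 d²+1)/(d(d+1)))·√((4a2+1)/6 + (d²−4)/16)/μ − (1−μ)/(4μ), then the state τ_AB = μ ρ_AB + (1−μ) ρ_A ⊗ (I_2/2) is entangled (not separable). -/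
open Matrix BigOperators
open scoped Kronecker ComplexOrder

noncomputable section

lemma trace_ptraceB' {dA dB : ℕ} (ρ : Matrix (Fin dA × Fin dB) (Fin dA × Fin dB) ℂ) :
    (ptraceB ρ).trace = ρ.trace := by
  simp [ptraceB, Matrix.trace, Matrix.diag, Fintype.sum_prod_type]

lemma gsic2_trace (a2 : ℝ) (Q : Fin (2^2) → Matrix (Fin 2) (Fin 2) ℂ)
    (hQ : IsGSIC 2 a2 Q) (j : Fin (2^2)) : (Q j).trace = (2:ℂ)⁻¹ := by
  obtain ⟨_, _, hsum, hdiag, hoff⟩ := hQ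
  have h1 : (Q j).trace = (Q j * (1 : Matrix (Fin 2) (Fin 2) ℂ)).trace := by simp
  rw [h1, ← hsum, Finset.mul_sum, Matrix.trace_sum,
    ← Finset.add_sum_erase _ _ (Finset.mem_univ j), hdiag]
  have hc : ∀ k ∈ Finset.univ.erase j,
      (Q j * Q k).trace = (((1 - (2:ℝ) * a2) / ((2:ℝ) * ((2:ℝ)^2 - 1)) : ℝ) : ℂ) := by
    intro k hk
    exact hoff j k (Finset.ne_of_mem_erase hk).symm
  rw [Finset.sum_congr rfl hc, Finset.sum_const,
    Finset.card_erase_of_mem (Finset.mem_univ j)]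
  have : (Finset.univ : Finset (Fin (2^2))).card - 1 = 3 := by simp
  rw [this]
  push_cast
  ring

/-- If the general-SIC separability bound holds and `J(ρ)` exceeds the steering threshold,
then `τ = μ ρ + (1−μ) ρ_A ⊗ I/2` is entangled (qudit-qubit case). -/
theorem entangled_mixture_GSIC_qudit_qubit (d : ℕ) (hd : 2 ≤ d) (a1 a2 μ : ℝ)
    (hμ : μ ∈ Set.Ioc (0 : ℝ) (1 / Real.sqrt 3))
    (ρAB : Matrix (Fin d × Fin 2) (Fin d × Fin 2) ℂ) (hρ : IsState ρAB)
    (P : Fin (d^2) → Matrix (Fin d) (Fin d) ℂ)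
    (Q : Fin (2^2) → Matrix (Fin 2) (Fin 2) ℂ)
    (hP : IsGSIC d a1 P) (hQ : IsGSIC 2 a2 Q)
    (hsep : ∀ σ : Matrix (Fin d × Fin 2) (Fin d × Fin 2) ℂ, SeparableState σ →
      ∑ j, (((P j ⊗ₖ Rgsic d Q j) * σ).trace).re ≤
        Real.sqrt ((a1 * (d : ℝ)^2 + 1) / ((d : ℝ) * ((d : ℝ) + 1))) *
          Real.sqrt ((4 * a2 + 1) / 6 + ((d : ℝ)^2 - 4) / 16))
    (hJ : ∑ j, (((P j ⊗ₖ Rgsic d Q j) * ρAB).trace).re >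
      Real.sqrt ((a1 * (d : ℝ)^2 + 1) / ((d : ℝ) * ((d : ℝ) + 1))) *
        Real.sqrt ((4 * a2 + 1) / 6 + ((d : ℝ)^2 - 4) / 16) / μ - (1 - μ) / (4 * μ)) :
    ¬ SeparableState ((μ : ℂ) • ρAB + ((1 - μ : ℝ) : ℂ) • (ptraceB ρAB ⊗ₖ ((2 : ℂ)⁻¹ • 1))) := by
  intro hSep
  set A := ptraceB ρAB with hA
  set B := Real.sqrt ((a1 * (d : ℝ)^2 + 1) / ((d : ℝ) * ((d : ℝ) + 1))) *
      Real.sqrt ((4 * a2 + 1) / 6 + ((d : ℝ)^2 - 4) / 16) with hB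
  set J := ∑ j, (((P j ⊗ₖ Rgsic d Q j) * ρAB).trace).re with hJdef
  have hPsum := hP.2.2.1
  -- trace of R operators
  have hRtr : ∀ j : Fin (d^2), (Rgsic d Q j).trace = (2:ℂ)⁻¹ := by
    intro j
    unfold Rgsic
    split
    · exact gsic2_trace a2 Q hQ _
    · simp [Matrix.trace_smul, Matrix.trace_one]
      norm_num
  -- per-j trace decomposition
  have hXτ : ∀ j : Fin (d^2),
      (((P j ⊗ₖ Rgsic d Q j) *
        ((μ : ℂ) • ρAB + ((1 - μ : ℝ) : ℂ) • (A ⊗ₖ ((2 : ℂ)⁻¹ • 1)))).trace)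
      = (μ : ℂ) * ((P j ⊗ₖ Rgsic d Q j) * ρAB).trace
        + (((1 - μ)/4 : ℝ) : ℂ) * (P j * A).trace := by
    intro j
    rw [Matrix.mul_add, Matrix.mul_smul, Matrix.mul_smul, Matrix.trace_add,
      Matrix.trace_smul, Matrix.trace_smul]
    have h2 : ((P j ⊗ₖ Rgsic d Q j) * (A ⊗ₖ ((2 : ℂ)⁻¹ • 1))).trace
        = (P j * A).trace * (4:ℂ)⁻¹ := by
      rw [← Matrix.mul_kronecker_mul, Matrix.trace_kronecker]
      congr 1
      rw [Matrix.mul_smul, Matrix.mul_one, Matrix.trace_smul, hRtr j]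
      norm_num
    rw [h2]
    push_cast [smul_eq_mul]
    ring
  -- sum over P j hits identity
  have hsumPA : ∑ j, (P j * A).trace = 1 := by
    rw [← Matrix.trace_sum, ← Finset.sum_mul, hPsum, Matrix.one_mul,
      trace_ptraceB', hρ.2]
  -- real part computation
  have key : ∑ j, (((P j ⊗ₖ Rgsic d Q j) *
      ((μ : ℂ) • ρAB + ((1 - μ : ℝ) : ℂ) • (A ⊗ₖ ((2 : ℂ)⁻¹ • 1)))).trace).re
      = μ * J + (1 - μ)/4 := by
    have : ∀ j : Fin (d^2), (((P j ⊗ₖ Rgsic d Q j) *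
        ((μ : ℂ) • ρAB + ((1 - μ : ℝ) : ℂ) • (A ⊗ₖ ((2 : ℂ)⁻¹ • 1)))).trace).re
        = μ * (((P j ⊗ₖ Rgsic d Q j) * ρAB).trace).re
          + (1 - μ)/4 * ((P j * A).trace).re := by
      intro j
      rw [hXτ j]
      simp [Complex.add_re, Complex.re_ofReal_mul]
    rw [Finset.sum_congr rfl (fun j _ => this j), Finset.sum_add_distrib,
      ← Finset.mul_sum, ← Finset.mul_sum]
    have hre : ∑ j, ((P j * A).trace).re = 1 := by
      rw [← Complex.re_sum, hsumPA, Complex.one_re]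
    rw [hre, ← hJdef]
    ring
  have hle := hsep _ hSep
  rw [key] at hle
  have hμ0 : 0 < μ := hμ.1
  have h2 : μ * (B/μ - (1-μ)/(4*μ)) = B - (1-μ)/4 := by
    field_simp
  have h3 : μ * (B/μ - (1-μ)/(4*μ)) < μ * J := mul_lt_mul_of_pos_left hJ hμ0
  rw [h2] at h3
  linarith
end
end

section
/- Let κ ∈ (1/2, 1], set s = √(2κ−1), and for b = 1,2,3 define the 2×2 matrices P_1^(b) = (I + s σ_b)/2 and P_2^(b) = (I − s σ_b)/2, where σ_1, σ_2, σ_3 are the Pauli matrices; these three pairs {P_1^(b), P_2^(b)} form a complete set of three MUMs on C^2 with efficiency parameter κ, and so do their entrywise complex conjugates {conj(P_1^(b)), conj(P_2^(b))}. Then for every two-qubit state ρ on C^2⊗C^2, ∑_{b=1}^{3} ∑_{n=1}^{2} Tr[(P_n^(b) ⊗ conj(P_n^(b))) ρ] = (3 + (2κ−1) H(ρ))/2. -/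
open Matrix BigOperators
open scoped Kronecker ComplexOrder

noncomputable section

/-- The qubit MUMs `P_n^(b) = (I ± √(2κ−1) σ_b)/2` built from the Pauli matrices. -/
def mumP (κ : ℝ) (b : Fin 3) (n : Fin 2) : Matrix (Fin 2) (Fin 2) ℂ :=
  (2 : ℂ)⁻¹ • (1 + (if n = 0 then ((Real.sqrt (2 * κ - 1) : ℝ) : ℂ)
    else -((Real.sqrt (2 * κ - 1) : ℝ) : ℂ)) • pauli b)


section MumAux

private lemma pauli_herm (b : Fin 3) : (pauli b)ᴴ = pauli b := by
  fin_cases b <;> ext i j <;> fin_cases i <;> fin_cases j <;>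
    simp [pauli, Matrix.conjTranspose_apply]

private lemma pauli_sq (b : Fin 3) : pauli b * pauli b = 1 := by
  fin_cases b <;> ext i j <;> fin_cases i <;> fin_cases j <;>
    simp [pauli, Matrix.mul_apply, Fin.sum_univ_two, Matrix.one_apply, Complex.I_mul_I]

private lemma pauli_trace (b : Fin 3) : (pauli b).trace = 0 := by
  fin_cases b <;> simp [pauli, Matrix.trace_fin_two]

private lemma pauli_trace_mul (b b' : Fin 3) :
    (pauli b * pauli b').trace = if b = b' then 2 else 0 := by
  fin_cases b <;> fin_cases b' <;>
    simp [pauli, Matrix.trace_fin_two, Matrix.mul_apply, Fin.sum_univ_two, Complex.I_mul_I] <;>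
    ring

private lemma herm_map_eq_transpose {A : Matrix (Fin 2) (Fin 2) ℂ} (hA : Aᴴ = A) :
    A.map (starRingEnd ℂ) = Aᵀ := by
  ext i j
  have h := congrFun (congrFun hA j) i
  simp only [Matrix.conjTranspose_apply] at h
  simp [Matrix.map_apply, Matrix.transpose_apply, starRingEnd_apply, h]

private lemma mumP_herm (κ : ℝ) (b : Fin 3) (n : Fin 2) : (mumP κ b n)ᴴ = mumP κ b n := by
  unfold mumP
  split_ifs <;>
    simp [Matrix.conjTranspose_smul, Matrix.conjTranspose_add, Matrix.conjTranspose_one,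
      pauli_herm, Complex.conj_ofReal, starRingEnd_apply]

private lemma trace_mumP_mul (κ : ℝ) (b b' : Fin 3) (n n' : Fin 2) :
    (mumP κ b n * mumP κ b' n').trace =
      (2 + (if n = 0 then ((Real.sqrt (2*κ-1) : ℝ) : ℂ) else -((Real.sqrt (2*κ-1) : ℝ) : ℂ))
        * (if n' = 0 then ((Real.sqrt (2*κ-1) : ℝ) : ℂ) else -((Real.sqrt (2*κ-1) : ℝ) : ℂ))
        * (pauli b * pauli b').trace) / 4 := by
  simp only [mumP, Matrix.smul_mul, Matrix.mul_smul, Matrix.add_mul, Matrix.mul_add,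
    Matrix.one_mul, Matrix.mul_one, Matrix.trace_smul, Matrix.trace_add, Matrix.trace_one,
    pauli_trace, smul_eq_mul, smul_zero, mul_zero, add_zero, zero_add]
  split_ifs <;> norm_num [Fintype.card_fin] <;> ring


private lemma psd_real_smul {M : Matrix (Fin 2) (Fin 2) ℂ} (hM : M.PosSemidef)
    {c : ℝ} (hc : 0 ≤ c) : (((c : ℝ) : ℂ) • M).PosSemidef := by
  refine .of_dotProduct_mulVec_nonneg ?_ fun x => ?_
  · rw [Matrix.IsHermitian, Matrix.conjTranspose_smul, hM.1.eq, Complex.star_def,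
      Complex.conj_ofReal]
  · rw [Matrix.smul_mulVec, dotProduct_smul, smul_eq_mul]
    exact mul_nonneg (by exact_mod_cast hc) (hM.dotProduct_mulVec_nonneg x)

private lemma proj_psd (b : Fin 3) (ε : ℂ) (hε : ε = 1 ∨ ε = -1) :
    ((2:ℂ)⁻¹ • (1 + ε • pauli b)).PosSemidef := by
  have hstar : star ε = ε := by rcases hε with h | h <;> simp [h]
  have hsq : ε * ε = 1 := by rcases hε with h | h <;> simp [h]
  have hsq2 : ε ^ 2 = 1 := by rw [sq]; exact hsq
  have hherm : ((2:ℂ)⁻¹ • (1 + ε • pauli b))ᴴ = (2:ℂ)⁻¹ • (1 + ε • pauli b) := by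
    simp [Matrix.conjTranspose_smul, Matrix.conjTranspose_add, Matrix.conjTranspose_one,
      pauli_herm, hstar, starRingEnd_apply]
  have hmul : ((2:ℂ)⁻¹ • (1 + ε • pauli b))ᴴ * ((2:ℂ)⁻¹ • (1 + ε • pauli b))
      = (2:ℂ)⁻¹ • (1 + ε • pauli b) := by
    rw [hherm]
    simp only [Matrix.smul_mul, Matrix.mul_smul, Matrix.add_mul, Matrix.mul_add,
      Matrix.one_mul, Matrix.mul_one, smul_smul, pauli_sq, hsq, one_smul]
    match_scalars <;> (first | ring1 | linear_combination hsq2 / 4)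
  rw [← hmul]
  exact Matrix.posSemidef_conjTranspose_mul_self _

private lemma mumP_psd (κ : ℝ) (hκ : κ ∈ Set.Ioc (1/2 : ℝ) 1) (b : Fin 3) (n : Fin 2) :
    (mumP κ b n).PosSemidef := by
  set s : ℝ := Real.sqrt (2 * κ - 1) with hs
  have h0 : (0:ℝ) ≤ 2 * κ - 1 := by have := hκ.1; linarith
  have hs0 : 0 ≤ s := Real.sqrt_nonneg _
  have hs1 : s ≤ 1 := by
    rw [hs]
    calc Real.sqrt (2 * κ - 1) ≤ Real.sqrt 1 := Real.sqrt_le_sqrt (by have := hκ.2; linarith)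
      _ = 1 := Real.sqrt_one
  have hp : (0:ℝ) ≤ (1 + s) / 2 := by linarith
  have hm : (0:ℝ) ≤ (1 - s) / 2 := by linarith
  have hQp := proj_psd b 1 (Or.inl rfl)
  have hQm := proj_psd b (-1) (Or.inr rfl)
  fin_cases n
  · have hdec : mumP κ b 0 = (((1 + s)/2 : ℝ) : ℂ) • ((2:ℂ)⁻¹ • (1 + (1:ℂ) • pauli b))
        + (((1 - s)/2 : ℝ) : ℂ) • ((2:ℂ)⁻¹ • (1 + (-1:ℂ) • pauli b)) := by
      unfold mumP
      push_cast
      match_scalars <;> simp <;> ring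
    show (mumP κ b 0).PosSemidef
    rw [hdec]
    exact (psd_real_smul hQp hp).add (psd_real_smul hQm hm)
  · have hdec : mumP κ b 1 = (((1 - s)/2 : ℝ) : ℂ) • ((2:ℂ)⁻¹ • (1 + (1:ℂ) • pauli b))
        + (((1 + s)/2 : ℝ) : ℂ) • ((2:ℂ)⁻¹ • (1 + (-1:ℂ) • pauli b)) := by
      unfold mumP
      push_cast
      match_scalars <;> simp <;> ring
    show (mumP κ b 1).PosSemidef
    rw [hdec]
    exact (psd_real_smul hQp hm).add (psd_real_smul hQm hp)

private lemma mumP_sum (κ : ℝ) (b : Fin 3) : ∑ n : Fin 2, mumP κ b n = 1 := by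
  rw [Fin.sum_univ_two]
  unfold mumP
  rw [if_pos rfl, if_neg (by decide : ¬(1 : Fin 2) = 0)]
  match_scalars <;> ring

private lemma mumP_trace (κ : ℝ) (b : Fin 3) (n : Fin 2) : (mumP κ b n).trace = 1 := by
  unfold mumP
  split_ifs <;>
    simp [Matrix.trace_smul, Matrix.trace_add, Matrix.trace_one, pauli_trace, Fintype.card_fin]


private lemma fin2_eq (n : Fin 2) : n = 0 ∨ n = 1 := by revert n; decide

private lemma pauli0_t : (pauli 0)ᵀ = pauli 0 := by
  ext i j <;> fin_cases i <;> fin_cases j <;> simp [pauli]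

private lemma pauli1_t : (pauli 1)ᵀ = -pauli 1 := by
  ext i j <;> fin_cases i <;> fin_cases j <;> simp [pauli]

private lemma pauli2_t : (pauli 2)ᵀ = pauli 2 := by
  ext i j <;> fin_cases i <;> fin_cases j <;> simp [pauli]

private lemma kron_neg (A B : Matrix (Fin 2) (Fin 2) ℂ) : A ⊗ₖ (-B) = -(A ⊗ₖ B) := by
  ext ⟨i,k⟩ ⟨j,l⟩
  simp [Matrix.kroneckerMap_apply]

private lemma kron_sum_n (κ : ℝ) (b : Fin 3) :
    ∑ n : Fin 2, mumP κ b n ⊗ₖ (mumP κ b n)ᵀ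
      = (2:ℂ)⁻¹ • (1 : Matrix (Fin 2 × Fin 2) (Fin 2 × Fin 2) ℂ)
        + (((Real.sqrt (2*κ-1) : ℝ) : ℂ)^2 / 2) • (pauli b ⊗ₖ (pauli b)ᵀ) := by
  rw [Fin.sum_univ_two]
  unfold mumP
  rw [if_pos rfl, if_neg (by decide : ¬(1 : Fin 2) = 0)]
  simp only [Matrix.transpose_smul, Matrix.transpose_add, Matrix.transpose_one,
    Matrix.smul_kronecker, Matrix.kronecker_smul, Matrix.add_kronecker, Matrix.kronecker_add,
    Matrix.one_kronecker_one, smul_smul]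
  module

private lemma keyM (κ : ℝ) :
    ∑ b : Fin 3, ∑ n : Fin 2, mumP κ b n ⊗ₖ (mumP κ b n).map (starRingEnd ℂ)
      = (2:ℂ)⁻¹ • ((3:ℂ) • (1 : Matrix (Fin 2 × Fin 2) (Fin 2 × Fin 2) ℂ)
          + (((Real.sqrt (2*κ-1) : ℝ) : ℂ)^2) •
            (pauli 0 ⊗ₖ pauli 0 - pauli 1 ⊗ₖ pauli 1 + pauli 2 ⊗ₖ pauli 2)) := by
  have hmap : ∀ b n, (mumP κ b n).map (starRingEnd ℂ) = (mumP κ b n)ᵀ :=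
    fun b n => herm_map_eq_transpose (mumP_herm κ b n)
  simp only [hmap]
  rw [Fin.sum_univ_three, kron_sum_n, kron_sum_n, kron_sum_n, pauli0_t, pauli1_t, pauli2_t,
    kron_neg]
  module

private lemma G_herm :
    (pauli 0 ⊗ₖ pauli 0 - pauli 1 ⊗ₖ pauli 1 + pauli 2 ⊗ₖ pauli 2)ᴴ
      = pauli 0 ⊗ₖ pauli 0 - pauli 1 ⊗ₖ pauli 1 + pauli 2 ⊗ₖ pauli 2 := by
  have h : ∀ (A B : Matrix (Fin 2) (Fin 2) ℂ), (A ⊗ₖ B)ᴴ = Aᴴ ⊗ₖ Bᴴ := by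
    intro A B
    ext ⟨i,k⟩ ⟨j,l⟩
    simp [Matrix.conjTranspose_apply, Matrix.kroneckerMap_apply]
  simp only [Matrix.conjTranspose_sub, Matrix.conjTranspose_add, h, pauli_herm]


private lemma mumP_cross (κ : ℝ) (b b' : Fin 3) (n n' : Fin 2) (hbb' : b ≠ b') :
    (mumP κ b n * mumP κ b' n').trace = (2:ℂ)⁻¹ := by
  rw [trace_mumP_mul, pauli_trace_mul, if_neg hbb']
  simp
  norm_num

private lemma mumP_same (κ : ℝ) (hκ : κ ∈ Set.Ioc (1/2 : ℝ) 1) (b : Fin 3) (n n' : Fin 2) :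
    (mumP κ b n * mumP κ b n').trace =
      if n = n' then ((κ : ℝ) : ℂ) else (((1 - κ) / ((2 : ℝ) - 1) : ℝ) : ℂ) := by
  have h0 : (0:ℝ) ≤ 2 * κ - 1 := by have := hκ.1; linarith
  have ht2 : ((Real.sqrt (2*κ-1) : ℝ) : ℂ) * ((Real.sqrt (2*κ-1) : ℝ) : ℂ) = 2*(κ:ℂ)-1 := by
    rw [← Complex.ofReal_mul, Real.mul_self_sqrt h0]
    push_cast
    ring
  rw [trace_mumP_mul, pauli_trace_mul, if_pos rfl]
  rcases fin2_eq n with rfl | rfl <;> rcases fin2_eq n' with rfl | rfl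
  · simp only [if_pos rfl]
    push_cast
    linear_combination ht2 / 2
  · simp only [if_pos rfl, if_neg (by decide : ¬(1 : Fin 2) = 0),
      if_neg (by decide : ¬(0 : Fin 2) = 1)]
    push_cast
    linear_combination (-1/2 : ℂ) * ht2
  · simp only [if_pos rfl, if_neg (by decide : ¬(1 : Fin 2) = 0),
      if_neg (by decide : ¬(1 : Fin 2) = 0)]
    push_cast
    linear_combination (-1/2 : ℂ) * ht2
  · simp only [if_pos rfl, if_neg (by decide : ¬(1 : Fin 2) = 0)]
    push_cast
    linear_combination ht2 / 2

end MumAux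

/-- The Pauli construction gives a complete set of three MUMs on ℂ², its entrywise
conjugate is one as well, and `∑_{b,n} Tr[(P_n^(b) ⊗ conj(P_n^(b))) ρ] = (3 + (2κ−1)H(ρ))/2`
for every two-qubit state. -/
theorem mum_pauli_conj_J (κ : ℝ) (hκ : κ ∈ Set.Ioc (1/2 : ℝ) 1) :
    IsCompleteMUM 2 κ (mumP κ) ∧
    IsCompleteMUM 2 κ (fun b n => (mumP κ b n).map (starRingEnd ℂ)) ∧
    ∀ ρ : Matrix (Fin 2 × Fin 2) (Fin 2 × Fin 2) ℂ, IsState ρ →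
      ∑ b : Fin 3, ∑ n : Fin 2,
          ((mumP κ b n ⊗ₖ (mumP κ b n).map (starRingEnd ℂ)) * ρ).trace
        = (((3 + (2 * κ - 1) * Hcorr ρ) / 2 : ℝ) : ℂ) := by
  have h0 : (0:ℝ) ≤ 2 * κ - 1 := by have := hκ.1; linarith
  have ht2 : ((Real.sqrt (2*κ-1) : ℝ) : ℂ)^2 = 2*(κ:ℂ)-1 := by
    rw [sq, ← Complex.ofReal_mul, Real.mul_self_sqrt h0]
    push_cast
    ring
  have hmap : ∀ b n, (mumP κ b n).map (starRingEnd ℂ) = (mumP κ b n)ᵀ :=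
    fun b n => herm_map_eq_transpose (mumP_herm κ b n)
  have hd : ((2:ℕ):ℝ)⁻¹ < κ ∧ κ ≤ 1 := ⟨by push_cast; linarith [hκ.1], hκ.2⟩
  refine ⟨⟨hd, fun b => ⟨fun n => mumP_psd κ hκ b n, mumP_sum κ b⟩,
      fun b n => mumP_trace κ b n,
      fun b b' n n' hbb' => by simpa using mumP_cross κ b b' n n' hbb',
      fun b n n' => by simpa using mumP_same κ hκ b n n'⟩,
    ⟨hd, fun b => ⟨fun n => by beta_reduce; rw [hmap]; exact (mumP_psd κ hκ b n).transpose,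
        by beta_reduce
           simp only [hmap, ← Matrix.transpose_sum]
           rw [mumP_sum]
           exact Matrix.transpose_one⟩,
      fun b n => by beta_reduce; rw [hmap, Matrix.trace_transpose]; exact mumP_trace κ b n,
      fun b b' n n' hbb' => by
        beta_reduce
        rw [hmap, hmap, ← Matrix.transpose_mul, Matrix.trace_transpose, Matrix.trace_mul_comm]
        simpa using mumP_cross κ b b' n n' hbb',
      fun b n n' => by
        beta_reduce
        rw [hmap, hmap, ← Matrix.transpose_mul, Matrix.trace_transpose, Matrix.trace_mul_comm]
        simpa using mumP_same κ hκ b n n'⟩, ?_⟩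
  intro ρ hρ
  have h1 : ∑ b : Fin 3, ∑ n : Fin 2,
        ((mumP κ b n ⊗ₖ (mumP κ b n).map (starRingEnd ℂ)) * ρ).trace
      = ((∑ b : Fin 3, ∑ n : Fin 2,
          mumP κ b n ⊗ₖ (mumP κ b n).map (starRingEnd ℂ)) * ρ).trace := by
    simp only [Finset.sum_mul, Matrix.trace_sum]
  rw [h1, keyM κ, Matrix.smul_mul, Matrix.add_mul, Matrix.smul_mul, Matrix.smul_mul,
    Matrix.one_mul, Matrix.trace_smul, Matrix.trace_add, Matrix.trace_smul, Matrix.trace_smul,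
    hρ.2]
  have hre : ((pauli 0 ⊗ₖ pauli 0 - pauli 1 ⊗ₖ pauli 1 + pauli 2 ⊗ₖ pauli 2) * ρ).trace
      = ((Hcorr ρ : ℝ) : ℂ) := by
    have h2 : (starRingEnd ℂ)
          (((pauli 0 ⊗ₖ pauli 0 - pauli 1 ⊗ₖ pauli 1 + pauli 2 ⊗ₖ pauli 2) * ρ).trace)
        = ((pauli 0 ⊗ₖ pauli 0 - pauli 1 ⊗ₖ pauli 1 + pauli 2 ⊗ₖ pauli 2) * ρ).trace := by
      show star (((pauli 0 ⊗ₖ pauli 0 - pauli 1 ⊗ₖ pauli 1 + pauli 2 ⊗ₖ pauli 2) * ρ).trace) = _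
      rw [← Matrix.trace_conjTranspose, Matrix.conjTranspose_mul, hρ.1.1.eq, G_herm,
        Matrix.trace_mul_comm]
    exact (Complex.conj_eq_iff_re.mp h2).symm
  rw [hre]
  simp only [smul_eq_mul]
  push_cast
  linear_combination ((Hcorr ρ : ℂ) / 2) * ht2
end
end
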